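/- Let δ be real with 0 < δ < 1/π. Then for purely imaginary distortion θ = iδ, the imaginary part of the difference of distorted points satisfies |Im(Φ_{iδ}(ξ) − Φ_{iδ}(η))| ≤ δ · min over k ∈ ℤ of |Re(Φ_{iδ}(ξ) − Φ_{iδ}(η)) − 2k| · π, for all real ξ, η. -/
import Mathlib


open Real

lemma sin_diff_le_aux (ξ η : ℝ) (k : ℤ) :
    |Real.sin (Real.pi * ξ) - Real.sin (Real.pi * η)| ≤ Real.pi * |ξ - η - 2 * k| := by
  have hper : Real.sin (Real.pi * ξ) = Real.sin (Real.pi * (ξ - 2 * k)) := by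
    have : Real.pi * (ξ - 2 * k) + (k : ℝ) * (2 * Real.pi) = Real.pi * ξ := by ring
    rw [← this, Real.sin_add_int_mul_two_pi]
  have h : ∀ a b : ℝ, |Real.sin a - Real.sin b| ≤ |a - b| := by
    intro a b
    rw [Real.sin_sub_sin]
    calc |2 * Real.sin ((a - b) / 2) * Real.cos ((a + b) / 2)|
        = 2 * |Real.sin ((a - b) / 2)| * |Real.cos ((a + b) / 2)| := by
          rw [abs_mul, abs_mul, abs_two]
      _ ≤ 2 * |(a - b) / 2| * 1 :=
          mul_le_mul (mul_le_mul_of_nonneg_left Real.abs_sin_le_abs (by norm_num))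
            (Real.abs_cos_le_one _) (abs_nonneg _) (by positivity)
      _ = |a - b| := by rw [abs_div, abs_two]; ring
  have h := h (Real.pi * (ξ - 2 * k)) (Real.pi * η)
  calc |Real.sin (Real.pi * ξ) - Real.sin (Real.pi * η)|
      = |Real.sin (Real.pi * (ξ - 2 * k)) - Real.sin (Real.pi * η)| := by rw [hper]
    _ ≤ |Real.pi * (ξ - 2 * k) - Real.pi * η| := h
    _ = Real.pi * |ξ - η - 2 * k| := by
        rw [show Real.pi * (ξ - 2 * k) - Real.pi * η = Real.pi * (ξ - η - 2 * k) by ring,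
          abs_mul, abs_of_pos Real.pi_pos]

theorem distorted_im_le_delta_dist (δ : ℝ) (hδ0 : 0 < δ) (hδ : δ < 1 / Real.pi) (ξ η : ℝ) :
    |(((ξ : ℂ) + Complex.I * δ * Real.sin (Real.pi * ξ)) -
        ((η : ℂ) + Complex.I * δ * Real.sin (Real.pi * η))).im| ≤
      δ * (⨅ k : ℤ,
        |(((ξ : ℂ) + Complex.I * δ * Real.sin (Real.pi * ξ)) -
            ((η : ℂ) + Complex.I * δ * Real.sin (Real.pi * η))).re - 2 * k|) * Real.pi := by
  have him : (((ξ : ℂ) + Complex.I * δ * Real.sin (Real.pi * ξ)) -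
      ((η : ℂ) + Complex.I * δ * Real.sin (Real.pi * η))).im
      = δ * (Real.sin (Real.pi * ξ) - Real.sin (Real.pi * η)) := by
    simp only [Complex.sub_im, Complex.add_im, Complex.mul_im, Complex.mul_re, Complex.I_re,
      Complex.I_im, Complex.ofReal_re, Complex.ofReal_im]
    ring
  have hre : (((ξ : ℂ) + Complex.I * δ * Real.sin (Real.pi * ξ)) -
      ((η : ℂ) + Complex.I * δ * Real.sin (Real.pi * η))).re = ξ - η := by
    simp only [Complex.sub_re, Complex.add_re, Complex.mul_re, Complex.mul_im, Complex.I_re,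
      Complex.I_im, Complex.ofReal_re, Complex.ofReal_im]
    ring
  rw [him, hre]
  have hinf : |Real.sin (Real.pi * ξ) - Real.sin (Real.pi * η)| / Real.pi
      ≤ ⨅ k : ℤ, |ξ - η - 2 * k| := by
    apply le_ciInf
    intro k
    rw [div_le_iff₀ Real.pi_pos]
    calc |Real.sin (Real.pi * ξ) - Real.sin (Real.pi * η)|
        ≤ Real.pi * |ξ - η - 2 * k| := sin_diff_le_aux ξ η k
      _ = |ξ - η - 2 * k| * Real.pi := by ring
  rw [abs_mul, abs_of_pos hδ0]
  calc δ * |Real.sin (Real.pi * ξ) - Real.sin (Real.pi * η)|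
      = δ * (|Real.sin (Real.pi * ξ) - Real.sin (Real.pi * η)| / Real.pi) * Real.pi := by
        field_simp
    _ ≤ δ * (⨅ k : ℤ, |ξ - η - 2 * k|) * Real.pi := by
        gcongr
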